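/- The map from ℂP¹ × ℂP¹ to ℂP³ sending the pair of classes of (a₁, a₂) and (b₁, b₂) (nonzero vectors in ℂ²) to the class of ( (i/2)(a₁b₁ + a₂b₂), (1/2)(a₂b₂ − a₁b₁), (1/2)(a₁b₂ + a₂b₁), (i/2)(a₂b₁ − a₁b₂) ) is well defined (the image vector is nonzero) and is a bijection from ℂP¹ × ℂP¹ onto the quadric Q₄ = {(z₁ : z₂ : z₃ : z₄) ∈ ℂP³ : z₁² + z₂² + z₃² + z₄² = 0}. -/

import Mathlib

open Complex

namespace CP1Seg

noncomputable def g (a b : Fin 2 → ℂ) : Fin 4 → ℂ :=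
  ![Complex.I / 2 * (a 0 * b 0 + a 1 * b 1), (1 : ℂ) / 2 * (a 1 * b 1 - a 0 * b 0),
    (1 : ℂ) / 2 * (a 0 * b 1 + a 1 * b 0), Complex.I / 2 * (a 1 * b 0 - a 0 * b 1)]

example (a₁ a₂ b₁ b₂ : ℂ) : g ![a₁,a₂] ![b₁,b₂] =
    ![Complex.I / 2 * (a₁ * b₁ + a₂ * b₂), (1 : ℂ) / 2 * (a₂ * b₂ - a₁ * b₁),
         (1 : ℂ) / 2 * (a₁ * b₂ + a₂ * b₁), Complex.I / 2 * (a₂ * b₁ - a₁ * b₂)] := rfl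

lemma ne_zero_iff2 (a : Fin 2 → ℂ) : a ≠ 0 ↔ a 0 ≠ 0 ∨ a 1 ≠ 0 := by
  rw [Function.ne_iff]
  constructor
  · rintro ⟨i, hi⟩; fin_cases i
    · exact Or.inl hi
    · exact Or.inr hi
  · rintro (h | h)
    · exact ⟨0, h⟩
    · exact ⟨1, h⟩

lemma g_smul (s t : ℂ) (a b : Fin 2 → ℂ) : g (s • a) (t • b) = (s * t) • g a b := by
  funext i; fin_cases i <;>
    simp [g, Pi.smul_apply, smul_eq_mul] <;> ring

lemma prods_eq {u : ℂ} {a b a' b' : Fin 2 → ℂ} (h : g a b = u • g a' b') :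
    a 0 * b 0 = u * (a' 0 * b' 0) ∧ a 1 * b 1 = u * (a' 1 * b' 1) ∧
    a 0 * b 1 = u * (a' 0 * b' 1) ∧ a 1 * b 0 = u * (a' 1 * b' 0) := by
  have h0 := congrFun h 0
  have h1 := congrFun h 1
  have h2 := congrFun h 2
  have h3 := congrFun h 3
  simp only [g, Pi.smul_apply, smul_eq_mul, Matrix.cons_val_zero, Matrix.cons_val_one,
    Matrix.head_cons, Matrix.cons_val_two, Matrix.tail_cons, Matrix.cons_val_three] at h0 h1 h2 h3
  refine ⟨?_, ?_, ?_, ?_⟩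
  · linear_combination (-Complex.I) * h0 - h1 +
      ((a 0 * b 0 + a 1 * b 1 - u * (a' 0 * b' 0 + a' 1 * b' 1)) / 2) * Complex.I_sq
  · linear_combination (-Complex.I) * h0 + h1 +
      ((a 0 * b 0 + a 1 * b 1 - u * (a' 0 * b' 0 + a' 1 * b' 1)) / 2) * Complex.I_sq
  · linear_combination h2 + Complex.I * h3 -
      ((a 1 * b 0 - a 0 * b 1 - u * (a' 1 * b' 0 - a' 0 * b' 1)) / 2) * Complex.I_sq
  · linear_combination h2 - Complex.I * h3 +
      ((a 1 * b 0 - a 0 * b 1 - u * (a' 1 * b' 0 - a' 0 * b' 1)) / 2) * Complex.I_sq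

lemma g_ne_zero (a b : Fin 2 → ℂ) (ha : a ≠ 0) (hb : b ≠ 0) : g a b ≠ 0 := by
  intro h
  have h' : g a b = (0 : ℂ) • g a a := by rw [h, zero_smul]
  obtain ⟨hp, hq, hr, hs⟩ := prods_eq h'
  simp only [zero_mul] at hp hq hr hs
  rcases (ne_zero_iff2 a).mp ha with h1 | h1 <;> rcases (ne_zero_iff2 b).mp hb with h2 | h2
  · exact mul_ne_zero h1 h2 hp
  · exact mul_ne_zero h1 h2 hr
  · exact mul_ne_zero h1 h2 hs
  · exact mul_ne_zero h1 h2 hq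

noncomputable def F (x : Projectivization ℂ (Fin 2 → ℂ) × Projectivization ℂ (Fin 2 → ℂ)) :
    Projectivization ℂ (Fin 4 → ℂ) :=
  Projectivization.mk ℂ (g x.1.rep x.2.rep)
    (g_ne_zero _ _ x.1.rep_nonzero x.2.rep_nonzero)

lemma F_mk (a b : Fin 2 → ℂ) (ha : a ≠ 0) (hb : b ≠ 0) :
    F (Projectivization.mk ℂ a ha, Projectivization.mk ℂ b hb) =
      Projectivization.mk ℂ (g a b) (g_ne_zero a b ha hb) := by
  obtain ⟨s, hs⟩ := Projectivization.exists_smul_eq_mk_rep ℂ a ha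
  obtain ⟨t, ht⟩ := Projectivization.exists_smul_eq_mk_rep ℂ b hb
  unfold F
  rw [Projectivization.mk_eq_mk_iff']
  refine ⟨(s : ℂ) * (t : ℂ), ?_⟩
  rw [← g_smul, Units.smul_def] at *
  rw [hs, ht]

lemma segre_inj {u : ℂ} {a b a' b' : Fin 2 → ℂ} (ha : a ≠ 0) (hb : b ≠ 0)
    (hp : a 0 * b 0 = u * (a' 0 * b' 0)) (hq : a 1 * b 1 = u * (a' 1 * b' 1))
    (hr : a 0 * b 1 = u * (a' 0 * b' 1)) (hs : a 1 * b 0 = u * (a' 1 * b' 0)) :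
    (∃ c : ℂ, c • a' = a) ∧ (∃ d : ℂ, d • b' = b) := by
  constructor
  · rcases (ne_zero_iff2 b).mp hb with h2 | h2
    · have hb' : u * b' 0 ≠ 0 := by
        rcases (ne_zero_iff2 a).mp ha with h1 | h1
        · intro hz
          exact mul_ne_zero h1 h2 (by linear_combination hp + a' 0 * hz)
        · intro hz
          exact mul_ne_zero h1 h2 (by
            linear_combination hs + a' 1 * hz)
      refine ⟨u * b' 0 / b 0, funext fun i => ?_⟩
      fin_cases i <;> simp only [Pi.smul_apply, smul_eq_mul, Fin.zero_eta, Fin.mk_one] <;> field_simp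
      · linear_combination -hp
      · linear_combination -hs
    · have hb' : u * b' 1 ≠ 0 := by
        rcases (ne_zero_iff2 a).mp ha with h1 | h1
        · intro hz
          exact mul_ne_zero h1 h2 (by linear_combination hr + a' 0 * hz)
        · intro hz
          exact mul_ne_zero h1 h2 (by linear_combination hq + a' 1 * hz)
      refine ⟨u * b' 1 / b 1, funext fun i => ?_⟩
      fin_cases i <;> simp only [Pi.smul_apply, smul_eq_mul, Fin.zero_eta, Fin.mk_one] <;> field_simp
      · linear_combination -hr
      · linear_combination -hq
  · rcases (ne_zero_iff2 a).mp ha with h1 | h1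
    · have ha' : u * a' 0 ≠ 0 := by
        rcases (ne_zero_iff2 b).mp hb with h2 | h2
        · intro hz
          exact mul_ne_zero h1 h2 (by linear_combination hp + b' 0 * hz)
        · intro hz
          exact mul_ne_zero h1 h2 (by linear_combination hr + b' 1 * hz)
      refine ⟨u * a' 0 / a 0, funext fun i => ?_⟩
      fin_cases i <;> simp only [Pi.smul_apply, smul_eq_mul, Fin.zero_eta, Fin.mk_one] <;> field_simp
      · linear_combination -hp
      · linear_combination -hr
    · have ha' : u * a' 1 ≠ 0 := by
        rcases (ne_zero_iff2 b).mp hb with h2 | h2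
        · intro hz
          exact mul_ne_zero h1 h2 (by linear_combination hs + b' 0 * hz)
        · intro hz
          exact mul_ne_zero h1 h2 (by linear_combination hq + b' 1 * hz)
      refine ⟨u * a' 1 / a 1, funext fun i => ?_⟩
      fin_cases i <;> simp only [Pi.smul_apply, smul_eq_mul, Fin.zero_eta, Fin.mk_one] <;> field_simp
      · linear_combination -hs
      · linear_combination -hq

lemma F_inj : Function.Injective F := by
  intro x y h
  unfold F at h
  rw [Projectivization.mk_eq_mk_iff'] at h
  obtain ⟨u, hu⟩ := h
  obtain ⟨hp, hq, hr, hs⟩ := prods_eq hu.symm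
  obtain ⟨⟨c, hc⟩, ⟨d, hd⟩⟩ := segre_inj x.1.rep_nonzero x.2.rep_nonzero hp hq hr hs
  have h1 : x.1 = y.1 := by
    rw [← x.1.mk_rep, ← y.1.mk_rep, Projectivization.mk_eq_mk_iff']
    exact ⟨c, hc⟩
  have h2 : x.2 = y.2 := by
    rw [← x.2.mk_rep, ← y.2.mk_rep, Projectivization.mk_eq_mk_iff']
    exact ⟨d, hd⟩
  exact Prod.ext h1 h2

noncomputable def Qf (z : Fin 4 → ℂ) : ℂ := z 0 ^ 2 + z 1 ^ 2 + z 2 ^ 2 + z 3 ^ 2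

lemma Qf_g (a b : Fin 2 → ℂ) : Qf (g a b) = 0 := by
  simp only [Qf, g, Matrix.cons_val_zero, Matrix.cons_val_one, Matrix.head_cons,
    Matrix.cons_val_two, Matrix.tail_cons, Matrix.cons_val_three]
  linear_combination (((a 0 * b 0 + a 1 * b 1)^2 - (a 1 * b 0 - a 0 * b 1)^2) / 4 +
    (-(a 0 * b 0 * (a 1 * b 1)) + (a 0 * b 1)^2 / 2 + (a 1 * b 0)^2 / 2)) * Complex.I_sq

lemma Qf_smul (c : ℂ) (z : Fin 4 → ℂ) : Qf (c • z) = c ^ 2 * Qf z := by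
  simp only [Qf, Pi.smul_apply, smul_eq_mul]; ring

lemma construct (pp qq rr ss : ℂ) (hpq : pp * qq = rr * ss)
    (hne : ¬(pp = 0 ∧ qq = 0 ∧ rr = 0 ∧ ss = 0)) :
    ∃ a b : Fin 2 → ℂ, a ≠ 0 ∧ b ≠ 0 ∧ a 0 * b 0 = pp ∧ a 1 * b 1 = qq ∧
      a 0 * b 1 = rr ∧ a 1 * b 0 = ss := by
  by_cases hP : pp ≠ 0
  · refine ⟨![pp, ss], ![1, rr / pp], ?_, ?_, ?_, ?_, ?_, ?_⟩
    · exact (ne_zero_iff2 _).2 (Or.inl (by simpa using hP))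
    · exact (ne_zero_iff2 _).2 (Or.inl (by simp))
    · simp
    · show ss * (rr / pp) = qq
      field_simp; linear_combination -hpq
    · show pp * (rr / pp) = rr
      field_simp
    · simp
  push_neg at hP
  by_cases hQ : qq ≠ 0
  · refine ⟨![rr, qq], ![ss / qq, 1], ?_, ?_, ?_, ?_, ?_, ?_⟩
    · exact (ne_zero_iff2 _).2 (Or.inr (by simpa using hQ))
    · exact (ne_zero_iff2 _).2 (Or.inr (by simp))
    · show rr * (ss / qq) = pp
      field_simp; linear_combination -hpq
    · simp
    · simp
    · show qq * (ss / qq) = ss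
      field_simp
  push_neg at hQ
  by_cases hR : rr ≠ 0
  · have hS : ss = 0 := by
      have : rr * ss = 0 := by rw [← hpq, hP, zero_mul]
      exact (mul_eq_zero.mp this).resolve_left hR
    refine ⟨![1, 0], ![0, rr], ?_, ?_, ?_, ?_, ?_, ?_⟩
    · exact (ne_zero_iff2 _).2 (Or.inl (by simp))
    · exact (ne_zero_iff2 _).2 (Or.inr (by simpa using hR))
    · simp [hP]
    · simp [hQ]
    · simp
    · simp [hS]
  push_neg at hR
  by_cases hS : ss ≠ 0
  · refine ⟨![0, ss], ![1, 0], ?_, ?_, ?_, ?_, ?_, ?_⟩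
    · exact (ne_zero_iff2 _).2 (Or.inr (by simpa using hS))
    · exact (ne_zero_iff2 _).2 (Or.inl (by simp))
    · simp [hP]
    · simp [hQ]
    · simp [hR]
    · simp
  push_neg at hS
  exact absurd ⟨hP, hQ, hR, hS⟩ hne

lemma g_eq_of_prods {a b : Fin 2 → ℂ} {z : Fin 4 → ℂ}
    (h00 : a 0 * b 0 = -Complex.I * z 0 - z 1) (h11 : a 1 * b 1 = -Complex.I * z 0 + z 1)
    (h01 : a 0 * b 1 = z 2 + Complex.I * z 3) (h10 : a 1 * b 0 = z 2 - Complex.I * z 3) :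
    g a b = z := by
  funext i
  fin_cases i
  · show Complex.I / 2 * (a 0 * b 0 + a 1 * b 1) = z 0
    linear_combination (Complex.I / 2) * (h00 + h11) - z 0 * Complex.I_sq
  · show (1 : ℂ) / 2 * (a 1 * b 1 - a 0 * b 0) = z 1
    linear_combination (h11 - h00) / 2
  · show (1 : ℂ) / 2 * (a 0 * b 1 + a 1 * b 0) = z 2
    linear_combination (h01 + h10) / 2
  · show Complex.I / 2 * (a 1 * b 0 - a 0 * b 1) = z 3
    linear_combination (Complex.I / 2) * (h10 - h01) - z 3 * Complex.I_sq

lemma F_range : Set.range F = {p : Projectivization ℂ (Fin 4 → ℂ) |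
    p.rep 0 ^ 2 + p.rep 1 ^ 2 + p.rep 2 ^ 2 + p.rep 3 ^ 2 = 0} := by
  ext p
  constructor
  · rintro ⟨x, rfl⟩
    obtain ⟨u, hu⟩ := Projectivization.exists_smul_eq_mk_rep ℂ (g x.1.rep x.2.rep)
      (g_ne_zero _ _ x.1.rep_nonzero x.2.rep_nonzero)
    have : Qf ((F x).rep) = 0 := by
      unfold F
      rw [← hu, Units.smul_def, Qf_smul, Qf_g, mul_zero]
    simpa [Qf] using this
  · intro hp
    have hp' : p.rep 0 ^ 2 + p.rep 1 ^ 2 + p.rep 2 ^ 2 + p.rep 3 ^ 2 = 0 := hp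
    have hpq : (-Complex.I * p.rep 0 - p.rep 1) * (-Complex.I * p.rep 0 + p.rep 1) =
        (p.rep 2 + Complex.I * p.rep 3) * (p.rep 2 - Complex.I * p.rep 3) := by
      linear_combination -hp' + (p.rep 0 ^ 2 + p.rep 3 ^ 2) * Complex.I_sq
    have hne : ¬(-Complex.I * p.rep 0 - p.rep 1 = 0 ∧ -Complex.I * p.rep 0 + p.rep 1 = 0 ∧
        p.rep 2 + Complex.I * p.rep 3 = 0 ∧ p.rep 2 - Complex.I * p.rep 3 = 0) := by
      rintro ⟨e1, e2, e3, e4⟩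
      apply p.rep_nonzero
      funext i
      fin_cases i
      · show p.rep 0 = 0
        linear_combination (Complex.I / 2) * (e1 + e2) + p.rep 0 * Complex.I_sq
      · show p.rep 1 = 0
        linear_combination (e2 - e1) / 2
      · show p.rep 2 = 0
        linear_combination (e3 + e4) / 2
      · show p.rep 3 = 0
        linear_combination (-Complex.I / 2) * (e3 - e4) + p.rep 3 * Complex.I_sq
    obtain ⟨a, b, ha, hb, h00, h11, h01, h10⟩ := construct _ _ _ _ hpq hne
    have hgz : g a b = p.rep := g_eq_of_prods h00 h11 h01 h10
    refine ⟨(Projectivization.mk ℂ a ha, Projectivization.mk ℂ b hb), ?_⟩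
    rw [F_mk]
    conv_rhs => rw [← p.mk_rep]
    rw [Projectivization.mk_eq_mk_iff']
    exact ⟨1, by rw [one_smul]; exact hgz.symm⟩

end CP1Seg



/-- The Segre-type map `ℂP¹ × ℂP¹ → ℂP³`,
`((a₁ : a₂), (b₁ : b₂)) ↦ ((i/2)(a₁b₁ + a₂b₂) : (1/2)(a₂b₂ − a₁b₁) : (1/2)(a₁b₂ + a₂b₁) : (i/2)(a₂b₁ − a₁b₂))`,
is well defined (the image vector is nonzero) and is a bijection from `ℂP¹ × ℂP¹` onto the
quadric `Q₄ = {(z₁ : z₂ : z₃ : z₄) : z₁² + z₂² + z₃² + z₄² = 0} ⊂ ℂP³`. -/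
theorem stmt2 :
    (∀ a₁ a₂ b₁ b₂ : ℂ, (![a₁, a₂] : Fin 2 → ℂ) ≠ 0 → (![b₁, b₂] : Fin 2 → ℂ) ≠ 0 →
      (![Complex.I / 2 * (a₁ * b₁ + a₂ * b₂), (1 : ℂ) / 2 * (a₂ * b₂ - a₁ * b₁),
         (1 : ℂ) / 2 * (a₁ * b₂ + a₂ * b₁), Complex.I / 2 * (a₂ * b₁ - a₁ * b₂)] :
        Fin 4 → ℂ) ≠ 0) ∧
    ∃ F : Projectivization ℂ (Fin 2 → ℂ) × Projectivization ℂ (Fin 2 → ℂ) →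
        Projectivization ℂ (Fin 4 → ℂ),
      (∀ (a₁ a₂ b₁ b₂ : ℂ) (ha : (![a₁, a₂] : Fin 2 → ℂ) ≠ 0)
        (hb : (![b₁, b₂] : Fin 2 → ℂ) ≠ 0)
        (h' : (![Complex.I / 2 * (a₁ * b₁ + a₂ * b₂), (1 : ℂ) / 2 * (a₂ * b₂ - a₁ * b₁),
          (1 : ℂ) / 2 * (a₁ * b₂ + a₂ * b₁), Complex.I / 2 * (a₂ * b₁ - a₁ * b₂)] :
          Fin 4 → ℂ) ≠ 0),
        F (Projectivization.mk ℂ ![a₁, a₂] ha, Projectivization.mk ℂ ![b₁, b₂] hb) =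
          Projectivization.mk ℂ
            ![Complex.I / 2 * (a₁ * b₁ + a₂ * b₂), (1 : ℂ) / 2 * (a₂ * b₂ - a₁ * b₁),
              (1 : ℂ) / 2 * (a₁ * b₂ + a₂ * b₁), Complex.I / 2 * (a₂ * b₁ - a₁ * b₂)] h') ∧
      Function.Injective F ∧
      Set.range F = {p : Projectivization ℂ (Fin 4 → ℂ) |
        p.rep 0 ^ 2 + p.rep 1 ^ 2 + p.rep 2 ^ 2 + p.rep 3 ^ 2 = 0} := by
  constructor
  · intro a₁ a₂ b₁ b₂ ha hb
    exact CP1Seg.g_ne_zero ![a₁, a₂] ![b₁, b₂] ha hb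
  · exact ⟨CP1Seg.F, fun a₁ a₂ b₁ b₂ ha hb h' => CP1Seg.F_mk ![a₁, a₂] ![b₁, b₂] ha hb,
      CP1Seg.F_inj, CP1Seg.F_range⟩
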